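/- arXiv:2307.13228 — 5 statements merged into one kernel-verified Lean document; each statement's English description precedes it below -/
import Mathlib

section
/- If M is a finite L-structure and A ⊆ M is a set such that M is semantically A-rigid, then M is syntactically A-rigid, i.e. dcl(A) = M. -/
open FirstOrder Language Set

universe u v w

variable (L : FirstOrder.Language.{u, v}) (M : Type w) [L.Structure M]

/-- The definable closure of `A`: the set of `b` such that `{b}` is definable
with parameters from `A`. -/
def dcl (A : Set M) : Set M := {b : M | A.Definable₁ L ({b} : Set M)}

/-- `M` is semantically `A`-rigid if every automorphism fixing `A` pointwise is the identity. -/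
def SemRigid (A : Set M) : Prop :=
  ∀ f : M ≃[L] M, (∀ a ∈ A, f a = a) → ∀ x : M, f x = x

/-- `M` is syntactically `A`-rigid if `dcl(A) = M`. -/
def SyntRigid (A : Set M) : Prop := dcl L M A = Set.univ

/-- The ∀-semantic degree of rigidity. -/
noncomputable def degForallSem : ℕ∞ :=
  sInf {n : ℕ∞ | ∃ m : ℕ, n = m ∧ ∀ A : Finset M, A.card = m → SemRigid L M ↑A}

/-- The ∃-semantic degree of rigidity. -/
noncomputable def degExistsSem : ℕ∞ :=
  sInf {n : ℕ∞ | ∃ m : ℕ, n = m ∧ ∃ A : Finset M, A.card = m ∧ SemRigid L M ↑A}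

/-- The ∀-syntactic degree of rigidity. -/
noncomputable def degForallSynt : ℕ∞ :=
  sInf {n : ℕ∞ | ∃ m : ℕ, n = m ∧ ∀ A : Finset M, A.card = m → SyntRigid L M ↑A}

/-- The ∃-syntactic degree of rigidity. -/
noncomputable def degExistsSynt : ℕ∞ :=
  sInf {n : ℕ∞ | ∃ m : ℕ, n = m ∧ ∃ A : Finset M, A.card = m ∧ SyntRigid L M ↑A}

/-- Two tuples have the same type over `A` iff they lie in the same `A`-definable sets. -/
def SameTp (A : Set M) {k : ℕ} (bs cs : Fin k → M) : Prop :=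
  ∀ s : Set (Fin k → M), A.Definable L s → (bs ∈ s ↔ cs ∈ s)

section Aux

variable {L M}

theorem SameTp.snoc_exists [Finite M] {k : ℕ} {A : Set M} {bs cs : Fin k → M}
    (h : SameTp L M A bs cs) (d : M) :
    ∃ d', SameTp L M A (Fin.snoc bs d) (Fin.snoc cs d') := by
  classical
  cases nonempty_fintype M
  by_contra hcon
  push_neg at hcon
  have hsep : ∀ d' : M, ∃ s : Set (Fin (k + 1) → M), A.Definable L s ∧
      Fin.snoc bs d ∈ s ∧ Fin.snoc cs d' ∉ s := by
    intro d'
    have h1 := hcon d'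
    simp only [SameTp, not_forall] at h1
    obtain ⟨s, hs, hiff⟩ := h1
    by_cases hb : Fin.snoc bs d ∈ s
    · exact ⟨s, hs, hb, fun hcs => hiff (iff_of_true hb hcs)⟩
    · exact ⟨sᶜ, hs.compl, hb, fun hcs => hiff (iff_of_false hb hcs)⟩
  choose S hSdef hSb hSc using hsep
  have hTdef : A.Definable L (⋂ d' ∈ (Finset.univ : Finset M), S d') :=
    Set.definable_biInter_finset hSdef _
  have hTb : Fin.snoc bs d ∈ ⋂ d' ∈ (Finset.univ : Finset M), S d' :=
    Set.mem_iInter₂.2 fun d' _ => hSb d'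
  have hP : A.Definable L ((fun g : Fin (k + 1) → M => g ∘ Fin.castSucc) ''
      (⋂ d' ∈ (Finset.univ : Finset M), S d')) := hTdef.image_comp _
  have hbP : bs ∈ (fun g : Fin (k + 1) → M => g ∘ Fin.castSucc) ''
      (⋂ d' ∈ (Finset.univ : Finset M), S d') :=
    ⟨Fin.snoc bs d, hTb, by funext i; simp⟩
  obtain ⟨g, hgT, hg⟩ := (h _ hP).1 hbP
  have hgeq : g = Fin.snoc cs (g (Fin.last k)) := by
    funext i
    refine Fin.lastCases ?_ ?_ i
    · simp
    · intro j
      have := congrFun hg j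
      simpa using this
  exact hSc (g (Fin.last k))
    (by rw [← hgeq]; exact Set.mem_iInter₂.1 hgT _ (Finset.mem_univ _))

theorem sameTp_key [Finite M] {A : Set M} {b c : M}
    (hst : SameTp L M A (fun _ : Fin 1 => b) (fun _ => c)) (hA : SemRigid L M A) : b = c := by
  classical
  cases nonempty_fintype M
  have : Nonempty M := ⟨b⟩
  obtain ⟨e, he⟩ := exists_surjective_nat M
  have main : ∀ m : ℕ, ∃ bs cs : Fin (m + 1) → M, bs 0 = b ∧ cs 0 = c ∧
      (∀ j < m, e j ∈ Set.range bs) ∧ SameTp L M A bs cs := by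
    intro m
    induction m with
    | zero => exact ⟨fun _ => b, fun _ => c, rfl, rfl, fun j hj => absurd hj (by omega), hst⟩
    | succ m ih =>
      obtain ⟨bs, cs, hb0, hc0, hrange, hstm⟩ := ih
      obtain ⟨d', hst'⟩ := hstm.snoc_exists (e m)
      refine ⟨Fin.snoc bs (e m), Fin.snoc cs d', ?_, ?_, ?_, hst'⟩
      · rw [← Fin.castSucc_zero, Fin.snoc_castSucc]; exact hb0
      · rw [← Fin.castSucc_zero, Fin.snoc_castSucc]; exact hc0
      · intro j hj
        rcases Nat.lt_succ_iff_lt_or_eq.1 hj with hj | rfl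
        · obtain ⟨i, hi⟩ := hrange j hj
          exact ⟨Fin.castSucc i, by rw [Fin.snoc_castSucc]; exact hi⟩
        · exact ⟨Fin.last _, by rw [Fin.snoc_last]⟩
  obtain ⟨m, hm⟩ : ∃ m : ℕ, ∀ x : M, ∃ j < m, e j = x := by
    refine ⟨(Finset.univ.image (Function.surjInv he)).sup id + 1, fun x =>
      ⟨Function.surjInv he x, ?_, Function.surjInv_eq he x⟩⟩
    exact Nat.lt_succ_of_le (Finset.le_sup (f := id)
      (Finset.mem_image_of_mem _ (Finset.mem_univ x)))
  obtain ⟨bs, cs, hb0, hc0, hrange, hstm⟩ := main m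
  have hbs : Function.Surjective bs := fun x => by
    obtain ⟨j, hj, rfl⟩ := hm x; exact hrange j hj
  have W1 : ∀ i j : Fin (m + 1), bs i = bs j ↔ cs i = cs j := by
    intro i j
    have := hstm {g | g i = g j}
      ⟨Term.equal (Term.var i) (Term.var j), by ext g; simp [Term.realize]⟩
    simpa using this
  have W2 : ∀ a : M, a ∈ A → ∀ i : Fin (m + 1), (bs i = a ↔ cs i = a) := by
    intro a ha i
    have := hstm {g | g i = a}
      ⟨Term.equal (Term.var i) (Constants.term (L.con (⟨a, ha⟩ : A))),
        by ext g; simp only [mem_setOf_eq, Formula.realize_equal, Term.realize_var,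
          Term.realize_constants, coe_con]⟩
    simpa using this
  have W3 : ∀ (l : ℕ) (F : L.Functions l) (σ : Fin l → Fin (m + 1)) (j : Fin (m + 1)),
      (Structure.funMap F (fun r => bs (σ r)) = bs j ↔
        Structure.funMap F (fun r => cs (σ r)) = cs j) := by
    intro l F σ j
    have := hstm {g | Structure.funMap F (fun r => g (σ r)) = g j}
      ⟨Term.equal (Term.func (Sum.inl F) fun r => Term.var (σ r)) (Term.var j),
        by ext g; simp only [mem_setOf_eq, Formula.realize_equal, Term.realize_func,
          Term.realize_var, withConstants_funMap_sumInl]; rfl⟩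
    simpa using this
  have W4 : ∀ (l : ℕ) (R : L.Relations l) (σ : Fin l → Fin (m + 1)),
      (Structure.RelMap R (fun r => bs (σ r)) ↔ Structure.RelMap R (fun r => cs (σ r))) := by
    intro l R σ
    have := hstm {g | Structure.RelMap R (fun r => g (σ r))}
      ⟨Relations.formula (Sum.inl R) fun r => Term.var (σ r),
        by ext g; simp only [mem_setOf_eq, Formula.realize_rel, Term.realize_var,
          withConstants_relMap_sumInl]; rfl⟩
    simpa using this
  set σx : M → Fin (m + 1) := Function.surjInv hbs with hσx
  have hσ : ∀ x, bs (σx x) = x := fun x => Function.surjInv_eq hbs x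
  set f : M → M := fun x => cs (σx x) with hf
  have hinj : Function.Injective f := by
    intro x y hxy
    have := (W1 (σx x) (σx y)).2 hxy
    rwa [hσ, hσ] at this
  have hbij := Finite.injective_iff_bijective.mp hinj
  have hfix : ∀ a ∈ A, f a = a := fun a ha => (W2 a ha (σx a)).1 (hσ a)
  have hmf : ∀ (l : ℕ) (F : L.Functions l) (v : Fin l → M),
      f (Structure.funMap F v) = Structure.funMap F (f ∘ v) := by
    intro l F v
    have hv : (fun r => bs (σx (v r))) = v := funext fun r => hσ (v r)
    have h1 : Structure.funMap F (fun r => bs (σx (v r))) =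
        bs (σx (Structure.funMap F v)) := by
      rw [hv]; exact (hσ _).symm
    have h2 := (W3 l F (fun r => σx (v r)) (σx (Structure.funMap F v))).1 h1
    exact h2.symm
  have hmr : ∀ (l : ℕ) (R : L.Relations l) (v : Fin l → M),
      Structure.RelMap R (f ∘ v) ↔ Structure.RelMap R v := by
    intro l R v
    have hv : (fun r => bs (σx (v r))) = v := funext fun r => hσ (v r)
    have h4 := (W4 l R (fun r => σx (v r))).symm
    rw [hv] at h4
    exact h4
  have hid := hA ⟨Equiv.ofBijective f hbij, fun {l} F v => hmf l F v,
    fun {l} R v => hmr l R v⟩ hfix b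
  have hfb : f b = b := hid
  have hfc : f b = c := by
    show cs (σx b) = c
    rw [(W1 (σx b) 0).1 (by rw [hσ, hb0]), hc0]
  exact hfb.symm.trans hfc

end Aux

/-- If `M` is a finite structure that is semantically `A`-rigid, then it is
syntactically `A`-rigid, i.e. `dcl(A) = M`. -/
theorem stmt_1 [Finite M] (A : Set M) (h : SemRigid L M A) : SyntRigid L M A := by
  classical
  cases nonempty_fintype M
  rw [SyntRigid, Set.eq_univ_iff_forall]
  intro b
  show A.Definable₁ L {b}
  have hsep : ∀ c : M, c ≠ b → ∃ s : Set (Fin 1 → M), A.Definable L s ∧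
      (fun _ => b) ∈ s ∧ (fun _ => c) ∉ s := by
    intro c hc
    have hnst : ¬ SameTp L M A (fun _ : Fin 1 => b) (fun _ => c) := fun hst =>
      hc (sameTp_key hst h).symm
    simp only [SameTp, not_forall] at hnst
    obtain ⟨s, hs, hiff⟩ := hnst
    by_cases hbmem : (fun _ : Fin 1 => b) ∈ s
    · exact ⟨s, hs, hbmem, fun hcs => hiff (iff_of_true hbmem hcs)⟩
    · exact ⟨sᶜ, hs.compl, hbmem, fun hcs => hiff (iff_of_false hbmem hcs)⟩
  choose S hSdef hSb hSc using hsep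
  have hSdef' : ∀ c : M, A.Definable L (if hc : c = b then Set.univ else S c hc) := by
    intro c
    by_cases hc : c = b <;> simp [hc, Set.definable_univ, hSdef]
  have key : {x : Fin 1 → M | x 0 ∈ ({b} : Set M)} =
      ⋂ c ∈ (Finset.univ : Finset M), (if hc : c = b then Set.univ else S c hc) := by
    ext x
    simp only [Set.mem_setOf_eq, Set.mem_singleton_iff, Set.mem_iInter]
    constructor
    · intro hx c _
      have hxb : x = fun _ => b := by
        funext i
        rw [Subsingleton.elim i 0]; exact hx
      by_cases hc : c = b
      · simp [hc]
      · simpa [hc, hxb] using hSb c hc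
    · intro hx
      by_contra hxb
      have hxc : x = fun _ => x 0 := by
        funext i; rw [Subsingleton.elim i 0]
      have := hx (x 0) (Finset.mem_univ _)
      rw [dif_neg hxb] at this
      exact hSc (x 0) hxb (hxc ▸ this)
  rw [Set.Definable₁, key]
  exact Set.definable_biInter_finset (fun c => hSdef' c) _
end

section
/- Let L be a purely relational language all of whose relation symbols are unary, and let M be a finite L-structure with exactly n+1 elements that is not semantically ∅-rigid. Then deg^{∀-sem}_rig(M) = n and deg^{∀-synt}_rig(M) = n. -/
open FirstOrder Language Set

universe u v w

variable (L : FirstOrder.Language.{u, v}) (M : Type w) [L.Structure M]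

open FirstOrder.Language.Structure in
/-- Lift an automorphism fixing `A` pointwise to the language with constants from `A`. -/
def equivWithConstants {L : FirstOrder.Language.{u, v}} {M : Type w} [L.Structure M]
    [L.IsRelational] (A : Set M) (f : M ≃[L] M) (hf : ∀ a ∈ A, f a = a) :
    M ≃[L[[A]]] M where
  toEquiv := f.toEquiv
  map_fun' := by
    intro n g x
    cases g with
    | inl g => exact isEmptyElim g
    | inr c =>
      cases n with
      | zero => exact hf c c.2
      | succ k => exact PEmpty.elim c
  map_rel' := by
    intro n r x
    cases r with
    | inl r => exact f.map_rel' r x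
    | inr r => exact isEmptyElim r

theorem definable_mem_iff {L : FirstOrder.Language.{u, v}} {M : Type w} [L.Structure M]
    [L.IsRelational] {A : Set M} {s : Set M} (hs : A.Definable₁ L s)
    (f : M ≃[L] M) (hf : ∀ a ∈ A, f a = a) (x : M) : f x ∈ s ↔ x ∈ s := by
  obtain ⟨φ, hφ⟩ := hs
  have h0 : ∀ y : M, y ∈ s ↔ φ.Realize (fun _ : Fin 1 => y) := by
    intro y
    have := Set.ext_iff.mp hφ (fun _ => y)
    simpa using this
  rw [h0, h0]
  have h2 := StrongHomClass.realize_formula (equivWithConstants A f hf) φ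
    (v := fun _ : Fin 1 => x)
  have h1 : ((equivWithConstants A f hf) ∘ fun _ : Fin 1 => x) = fun _ : Fin 1 => f x := rfl
  rw [h1] at h2
  exact h2

theorem definable_singleton' {L : FirstOrder.Language.{u, v}} {M : Type w} [L.Structure M]
    {A : Set M} {a : M} (ha : a ∈ A) : A.Definable₁ L ({a} : Set M) := by
  refine ⟨Term.equal (Term.var 0) ((L.con (⟨a, ha⟩ : A)).term), ?_⟩
  ext v
  simp [Formula.realize_equal, Term.realize_constants]

theorem Definable₁.compl' {L : FirstOrder.Language.{u, v}} {M : Type w} [L.Structure M]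
    {A : Set M} {s : Set M} (h : A.Definable₁ L s) : A.Definable₁ L sᶜ := by
  have h2 := Set.Definable.compl (α := Fin 1) (s := {x : Fin 1 → M | x 0 ∈ s}) h
  exact h2

open FirstOrder.Language.Structure in
/-- The transposition of two elements with the same unary type is an automorphism. -/
def swapAut {L : FirstOrder.Language.{u, v}} {M : Type w} [L.Structure M]
    [L.IsRelational] [DecidableEq M] (hUnary : ∀ k : ℕ, k ≠ 1 → IsEmpty (L.Relations k)) (a b : M)
    (hrel : ∀ r : L.Relations 1,
      RelMap r (fun _ : Fin 1 => a) ↔ RelMap r (fun _ : Fin 1 => b)) :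
    M ≃[L] M where
  toEquiv := Equiv.swap a b
  map_fun' := fun {n} g _ => isEmptyElim g
  map_rel' := by
    intro n r x
    match n, r, x with
    | 0, r, x => exact ((hUnary 0 (by omega)).elim r)
    | (k+2), r, x => exact ((hUnary (k+2) (by omega)).elim r)
    | 1, r, x =>
      have hx : x = fun _ => x 0 := funext fun i => by rw [Subsingleton.elim i 0]
      have key : ∀ y : M, RelMap r (fun _ : Fin 1 => Equiv.swap a b y) ↔
          RelMap r (fun _ : Fin 1 => y) := by
        intro y
        rcases eq_or_ne y a with rfl | hya
        · rw [Equiv.swap_apply_left]; exact (hrel r).symm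
        rcases eq_or_ne y b with rfl | hyb
        · rw [Equiv.swap_apply_right]; exact hrel r
        · rw [Equiv.swap_apply_of_ne_of_ne hya hyb]
      rw [hx]
      exact key (x 0)

/-- A finite structure with `n+1` elements in a unary relational language that is not
semantically ∅-rigid has ∀-semantic and ∀-syntactic degrees of rigidity equal to `n`. -/
theorem stmt_8 [L.IsRelational] (hUnary : ∀ k : ℕ, k ≠ 1 → IsEmpty (L.Relations k))
    [Fintype M] (n : ℕ) (hcard : Fintype.card M = n + 1)
    (hnotrigid : ¬ SemRigid L M (∅ : Set M)) :
    degForallSem L M = (n : ℕ∞) ∧ degForallSynt L M = (n : ℕ∞) := by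
  classical
  open FirstOrder.Language.Structure in
  -- Extract a nontrivial automorphism
  obtain ⟨f, a, ha⟩ : ∃ f : M ≃[L] M, ∃ x : M, f x ≠ x := by
    by_contra h
    push_neg at h
    exact hnotrigid fun f _ x => h f x
  set b := f a with hb
  have hne : b ≠ a := ha
  have hrel : ∀ r : L.Relations 1,
      RelMap r (fun _ : Fin 1 => a) ↔ RelMap r (fun _ : Fin 1 => b) := by
    intro r
    exact (f.map_rel' r (fun _ : Fin 1 => a)).symm
  set g : M ≃[L] M := swapAut hUnary a b hrel with hgdef
  have hg : ∀ x : M, g x = Equiv.swap a b x := fun _ => rfl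
  have hga : g a = b := by rw [hg, Equiv.swap_apply_left]
  -- the counterexample sets
  have hcounter : ∀ A : Finset M, a ∉ A → b ∉ A →
      (¬ SemRigid L M ↑A) ∧ (¬ SyntRigid L M ↑A) := by
    intro A haA hbA
    have hfix : ∀ x ∈ (↑A : Set M), g x = x := by
      intro x hx
      rw [hg, Equiv.swap_apply_of_ne_of_ne]
      · exact fun h => haA (h ▸ hx)
      · exact fun h => hbA (h ▸ hx)
    constructor
    · intro hR
      exact hne ((hga.symm).trans (hR g hfix a))
    · intro hR
      have hadcl : a ∈ dcl L M ↑A := by rw [hR]; trivial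
      have hdef : (↑A : Set M).Definable₁ L ({a} : Set M) := hadcl
      have := (definable_mem_iff hdef g hfix a).2 rfl
      rw [hga] at this
      exact hne this
  -- small sets admit counterexamples
  have hsmall : ∀ m : ℕ, m < n → ∃ A : Finset M, A.card = m ∧ a ∉ A ∧ b ∉ A := by
    intro m hm
    have hcd : ((Finset.univ.erase a).erase b).card = n - 1 := by
      rw [Finset.card_erase_of_mem, Finset.card_erase_of_mem]
      · rw [Finset.card_univ, hcard]; omega
      · exact Finset.mem_univ a
      · exact Finset.mem_erase.2 ⟨hne, Finset.mem_univ b⟩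
    obtain ⟨A, hAsub, hAcard⟩ :=
      Finset.exists_subset_card_eq (s := (Finset.univ.erase a).erase b) (n := m)
        (by rw [hcd]; omega)
    refine ⟨A, hAcard, fun h => ?_, fun h => ?_⟩
    · exact (Finset.mem_erase.1 (Finset.erase_subset _ _ (hAsub h))).1 rfl
    · exact (Finset.mem_erase.1 (hAsub h)).1 rfl
  -- membership of n in the semantic set
  have hmemsem : ∀ A : Finset M, A.card = n → SemRigid L M ↑A := by
    intro A hA f' hfix x
    by_contra hx
    have hxA : x ∉ A := fun h => hx (hfix x h)
    have hfxA : f' x ∉ A := by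
      intro h
      exact hx (EquivLike.injective f' (hfix _ h))
    have hcc : Aᶜ.card = 1 := by
      rw [Finset.card_compl, hA, hcard]
      omega
    exact hx (Finset.card_le_one.1 hcc.le _ (Finset.mem_compl.2 hfxA) _
      (Finset.mem_compl.2 hxA))
  -- membership of n in the syntactic set
  have hmemsynt : ∀ A : Finset M, A.card = n → SyntRigid L M ↑A := by
    intro A hA
    have hAdef : (↑A : Set M).Definable₁ L (↑A : Set M) := by
      have hU : {v : Fin 1 → M | v 0 ∈ (↑A : Set M)} =
          ⋃ i ∈ (Finset.univ : Finset {x // x ∈ A}),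
            {v : Fin 1 → M | v 0 ∈ ({(i : M)} : Set M)} := by
        ext v
        simp
      show (↑A : Set M).Definable L _
      rw [hU]
      exact Set.definable_biUnion_finset
        (fun i => definable_singleton' (A := (↑A : Set M)) i.2) _
    ext x
    simp only [Set.mem_univ, iff_true]
    show (↑A : Set M).Definable₁ L ({x} : Set M)
    by_cases hx : x ∈ A
    · exact definable_singleton' (Finset.mem_coe.2 hx)
    · have hcc : Aᶜ.card = 1 := by
        rw [Finset.card_compl, hA, hcard]; omega
      obtain ⟨c, hc⟩ := Finset.card_eq_one.1 hcc
      have hxc : x = c := by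
        have : x ∈ Aᶜ := Finset.mem_compl.2 hx
        rw [hc] at this
        exact Finset.mem_singleton.1 this
      have hset : ({x} : Set M) = (↑A : Set M)ᶜ := by
        ext y
        simp only [Set.mem_singleton_iff, Set.mem_compl_iff, Finset.mem_coe]
        constructor
        · rintro rfl; exact hx
        · intro hy
          have : y ∈ Aᶜ := Finset.mem_compl.2 hy
          rw [hc] at this
          rw [hxc]
          exact Finset.mem_singleton.1 this
      rw [hset]
      exact Definable₁.compl' hAdef
  constructor
  · refine le_antisymm (sInf_le ⟨n, rfl, hmemsem⟩) (le_sInf ?_)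
    rintro k ⟨m, rfl, H⟩
    rw [Nat.cast_le]
    by_contra hmn
    push_neg at hmn
    obtain ⟨A, hAcard, haA, hbA⟩ := hsmall m hmn
    exact (hcounter A haA hbA).1 (H A hAcard)
  · refine le_antisymm (sInf_le ⟨n, rfl, hmemsynt⟩) (le_sInf ?_)
    rintro k ⟨m, rfl, H⟩
    rw [Nat.cast_le]
    by_contra hmn
    push_neg at hmn
    obtain ⟨A, hAcard, haA, hbA⟩ := hsmall m hmn
    exact (hcounter A haA hbA).2 (H A hAcard)
end

section
/- Let L be a purely relational language all of whose relation symbols are unary, and let M be an infinite L-structure that is not semantically ∅-rigid. Then for every n ∈ ℕ there exists A ⊆ M with |A| = n such that M is not semantically A-rigid; consequently deg^{∀-sem}_rig(M) = ∞ and deg^{∀-synt}_rig(M) = ∞. -/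
open FirstOrder Language Set

universe u v w

variable (L : FirstOrder.Language.{u, v}) (M : Type w) [L.Structure M]

variable {L M}

lemma fix_of_def {A : Set M} (g : M ≃[L] M) (hg : ∀ a ∈ A, g a = a) {b : M}
    (hb : A.Definable₁ L ({b} : Set M)) : g b = b := by
  rw [Set.Definable₁, Set.definable_iff_exists_formula_sum] at hb
  obtain ⟨φ, hφ⟩ := hb
  have h1 : (fun _ : Fin 1 => b) ∈ {x : Fin 1 → M | x 0 ∈ ({b} : Set M)} := rfl
  rw [hφ] at h1
  have h2 : Sum.elim ((↑) : A → M) (fun _ : Fin 1 => g b)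
      = g ∘ Sum.elim ((↑) : A → M) (fun _ : Fin 1 => b) := by
    funext i
    cases i with
    | inl a => exact (hg a a.2).symm
    | inr j => rfl
  have h3 : (fun _ : Fin 1 => g b) ∈ {v : Fin 1 → M | φ.Realize (Sum.elim (↑) v)} := by
    simp only [Set.mem_setOf_eq, h2, StrongHomClass.realize_formula]
    exact h1
  rw [← hφ] at h3
  exact h3

lemma syntRigid_semRigid {A : Set M} (h : SyntRigid L M A) : SemRigid L M A := by
  intro g hg x
  have hx : x ∈ dcl L M A := h ▸ Set.mem_univ x
  exact fix_of_def g hg hx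

/-- Swap of two elements realizing the same unary relations is an automorphism. -/
noncomputable def swapAuto [L.IsRelational] (hUnary : ∀ k : ℕ, k ≠ 1 → IsEmpty (L.Relations k))
    (g : M ≃[L] M) (b : M) : M ≃[L] M :=
  letI := Classical.decEq M
  { Equiv.swap b (g b) with
    map_fun' := fun f => isEmptyElim f
    map_rel' := by
      intro n r x
      show Structure.RelMap r (⇑(Equiv.swap b (g b)) ∘ x) ↔ Structure.RelMap r x
      by_cases hn : n = 1
      · subst hn
        have key : ∀ y : M, Structure.RelMap r (fun _ : Fin 1 => Equiv.swap b (g b) y)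
            ↔ Structure.RelMap r (fun _ : Fin 1 => y) := by
          intro y
          have hgb : ∀ z : M, Structure.RelMap r (fun _ : Fin 1 => g z)
              ↔ Structure.RelMap r (fun _ : Fin 1 => z) := by
            intro z
            exact StrongHomClass.map_rel g r (fun _ : Fin 1 => z)
          by_cases hyb : y = b
          · subst hyb; rw [Equiv.swap_apply_left]; exact hgb y
          · by_cases hyc : y = g b
            · subst hyc; rw [Equiv.swap_apply_right]; exact (hgb b).symm
            · rw [Equiv.swap_apply_of_ne_of_ne hyb hyc]
        have hxy : x = fun _ : Fin 1 => x 0 := funext fun i => by rw [Subsingleton.elim i 0]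
        have hcomp : ⇑(Equiv.swap b (g b)) ∘ x = fun _ : Fin 1 => Equiv.swap b (g b) (x 0) := by
          funext i; rw [Subsingleton.elim i 0]; rfl
        rw [hcomp, hxy]
        exact key (x 0)
      · exact ((hUnary n hn).false r).elim }

/-- An infinite structure in a unary relational language that is not semantically
∅-rigid fails to be semantically `A`-rigid for sets `A` of every finite cardinality;
consequently its ∀-semantic and ∀-syntactic degrees of rigidity are `∞`. -/
theorem stmt_9 [L.IsRelational] (hUnary : ∀ k : ℕ, k ≠ 1 → IsEmpty (L.Relations k))
    [Infinite M] (hnotrigid : ¬ SemRigid L M (∅ : Set M)) :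
    (∀ n : ℕ, ∃ A : Finset M, A.card = n ∧ ¬ SemRigid L M ↑A) ∧
    degForallSem L M = ⊤ ∧ degForallSynt L M = ⊤ := by
  rw [SemRigid] at hnotrigid
  push_neg at hnotrigid
  obtain ⟨g, -, b, hb⟩ := hnotrigid
  letI := Classical.decEq M
  set τ : M ≃[L] M := swapAuto hUnary g b with hτ
  have hτb : τ b = g b := Equiv.swap_apply_left b (g b)
  have main : ∀ n : ℕ, ∃ A : Finset M, A.card = n ∧ ¬ SemRigid L M ↑A := by
    intro n
    have hinf : ({b, g b}ᶜ : Set M).Infinite :=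
      Set.Finite.infinite_compl (Set.toFinite ({b, g b} : Set M))
    obtain ⟨A, hA, hcard⟩ := hinf.exists_subset_card_eq n
    refine ⟨A, hcard, fun hrig => ?_⟩
    have hfix : ∀ a ∈ (A : Set M), τ a = a := by
      intro a ha
      have := hA ha
      simp only [Set.mem_compl_iff, Set.mem_insert_iff, Set.mem_singleton_iff, not_or] at this
      exact Equiv.swap_apply_of_ne_of_ne this.1 this.2
    exact hb (hτb ▸ hrig τ hfix b)
  refine ⟨main, ?_, ?_⟩
  · have hempty : {n : ℕ∞ | ∃ m : ℕ, n = m ∧ ∀ A : Finset M, A.card = m → SemRigid L M ↑A}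
        = ∅ := by
      apply Set.eq_empty_iff_forall_notMem.mpr
      rintro x ⟨m, -, hm⟩
      obtain ⟨A, hcard, hA⟩ := main m
      exact hA (hm A hcard)
    rw [degForallSem, hempty, sInf_empty]
  · have hempty : {n : ℕ∞ | ∃ m : ℕ, n = m ∧ ∀ A : Finset M, A.card = m → SyntRigid L M ↑A}
        = ∅ := by
      apply Set.eq_empty_iff_forall_notMem.mpr
      rintro x ⟨m, -, hm⟩
      obtain ⟨A, hcard, hA⟩ := main m
      exact hA (syntRigid_semRigid (hm A hcard))
    rw [degForallSynt, hempty, sInf_empty]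
end

section
/- Let L be a purely relational language all of whose relation symbols are unary, and let M be an infinite L-structure that is semantically ∅-rigid but not syntactically ∅-rigid (dcl(∅) ≠ M). Then for every n ∈ ℕ there exists A ⊆ M with |A| = n and dcl(A) ≠ M; consequently deg^{∀-sem}_rig(M) = 0 and deg^{∀-synt}_rig(M) = ∞. -/
open FirstOrder Language Set

universe u v w

variable (L : FirstOrder.Language.{u, v}) (M : Type w) [L.Structure M]

section Aux

open FirstOrder.Language.Structure

variable {L M}

/-- Realization of terms in a unary relational language with constants commutes with any
bijection fixing the constants. -/
lemma term_realize_comp_aux [L.IsRelational] {A : Set M} (σ : M ≃ M)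
    (hfix : ∀ a : A, σ ↑a = ↑a) {β : Type*} (t : (L[[A]]).Term β) (v : β → M) :
    t.realize (⇑σ ∘ v) = σ (t.realize v) := by
  induction t with
  | var i => rfl
  | @func l f ts _ =>
    cases f with
    | inl g => exact isEmptyElim g
    | inr c =>
      cases l with
      | zero =>
        show (c : M) = σ (c : M)
        exact (hfix c).symm
      | succ k => exact isEmptyElim c

/-- Invariance of satisfaction under bijections preserving the (finitely many) relation
symbols occurring in a formula and fixing the constants. -/
lemma realize_comp_equiv_aux [L.IsRelational]
    (hUnary : ∀ k : ℕ, k ≠ 1 → IsEmpty (L.Relations k)) {A : Set M} {α : Type*} :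
    ∀ {n : ℕ} (φ : (L[[A]]).BoundedFormula α n),
      ∃ S : Set (L.Relations 1), S.Finite ∧
        ∀ σ : M ≃ M, (∀ a : A, σ ↑a = ↑a) →
          (∀ R ∈ S, ∀ x : Fin 1 → M, RelMap R (⇑σ ∘ x) ↔ RelMap R x) →
          ∀ (v : α → M) (xs : Fin n → M),
            φ.Realize (⇑σ ∘ v) (⇑σ ∘ xs) ↔ φ.Realize v xs := by
  intro n φ
  induction φ with
  | falsum => exact ⟨∅, finite_empty, fun σ _ _ v xs => Iff.rfl⟩
  | equal t₁ t₂ =>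
    refine ⟨∅, finite_empty, fun σ hfix _ v xs => ?_⟩
    have h : ⇑σ ∘ Sum.elim v xs = Sum.elim (⇑σ ∘ v) (⇑σ ∘ xs) := by
      funext i; cases i <;> rfl
    show t₁.realize (Sum.elim (⇑σ ∘ v) (⇑σ ∘ xs)) = t₂.realize (Sum.elim (⇑σ ∘ v) (⇑σ ∘ xs)) ↔
      t₁.realize (Sum.elim v xs) = t₂.realize (Sum.elim v xs)
    rw [← h, term_realize_comp_aux σ hfix, term_realize_comp_aux σ hfix]
    exact ⟨fun hh => σ.injective hh, fun hh => congrArg σ hh⟩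
  | @rel n l R ts =>
    cases R with
    | inr e => exact e.elim
    | inl r =>
      rcases eq_or_ne l 1 with rfl | hl
      · refine ⟨{r}, finite_singleton r, fun σ hfix hS v xs => ?_⟩
        show RelMap r (fun i => (ts i).realize (Sum.elim (⇑σ ∘ v) (⇑σ ∘ xs))) ↔
          RelMap r (fun i => (ts i).realize (Sum.elim v xs))
        have h : ⇑σ ∘ Sum.elim v xs = Sum.elim (⇑σ ∘ v) (⇑σ ∘ xs) := by
          funext i; cases i <;> rfl
        have h2 : (fun i => (ts i).realize (Sum.elim (⇑σ ∘ v) (⇑σ ∘ xs))) =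
            ⇑σ ∘ fun i => (ts i).realize (Sum.elim v xs) := by
          funext i
          rw [← h, term_realize_comp_aux σ hfix]
          rfl
        rw [h2]
        exact hS r (mem_singleton r) _
      · exact ((hUnary l hl).false r).elim
  | imp φ ψ ihφ ihψ =>
    obtain ⟨S₁, h₁, H₁⟩ := ihφ
    obtain ⟨S₂, h₂, H₂⟩ := ihψ
    refine ⟨S₁ ∪ S₂, h₁.union h₂, fun σ hfix hS v xs => ?_⟩
    exact imp_congr (H₁ σ hfix (fun R hR => hS R (Or.inl hR)) v xs)
      (H₂ σ hfix (fun R hR => hS R (Or.inr hR)) v xs)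
  | all φ ih =>
    obtain ⟨S, hfin, H⟩ := ih
    refine ⟨S, hfin, fun σ hfix hS v xs => ?_⟩
    simp only [BoundedFormula.realize_all]
    constructor
    · intro h x
      have hh := H σ hfix hS v (Fin.snoc xs x)
      rw [Fin.comp_snoc] at hh
      exact hh.mp (h (σ x))
    · intro h x
      obtain ⟨y, rfl⟩ := σ.surjective x
      have hh := H σ hfix hS v (Fin.snoc xs y)
      rw [Fin.comp_snoc] at hh
      exact hh.mpr (h y)

/-- In a semantically ∅-rigid structure, any two distinct points are separated by a
unary relation. -/
lemma exists_rel_ne_aux [L.IsRelational]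
    (hUnary : ∀ k : ℕ, k ≠ 1 → IsEmpty (L.Relations k))
    (hsem : SemRigid L M (∅ : Set M)) {a b : M} (hab : a ≠ b) :
    ∃ R : L.Relations 1,
      ¬ (RelMap R (fun _ : Fin 1 => a) ↔ RelMap R (fun _ : Fin 1 => b)) := by
  classical
  by_contra hcon
  push_neg at hcon
  have frel : ∀ {n : ℕ} (r : L.Relations n) (x : Fin n → M),
      RelMap r (⇑(Equiv.swap a b) ∘ x) ↔ RelMap r x := by
    intro n r x
    rcases eq_or_ne n 1 with rfl | hn
    · have hcx : ⇑(Equiv.swap a b) ∘ x = fun _ : Fin 1 => Equiv.swap a b (x 0) := by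
        funext i; rw [Subsingleton.elim i (0 : Fin 1)]; rfl
      have hx : x = fun _ : Fin 1 => x 0 := by
        funext i; rw [Subsingleton.elim i (0 : Fin 1)]
      rw [hcx]; conv_rhs => rw [hx]
      rcases eq_or_ne (x 0) a with h0 | h0
      · rw [h0, Equiv.swap_apply_left]; exact (hcon r).symm
      · rcases eq_or_ne (x 0) b with h1 | h1
        · rw [h1, Equiv.swap_apply_right]; exact hcon r
        · rw [Equiv.swap_apply_of_ne_of_ne h0 h1]
    · exact ((hUnary n hn).false r).elim
  let f : M ≃[L] M :=
    { toEquiv := Equiv.swap a b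
      map_fun' := fun {n} g _ => isEmptyElim g
      map_rel' := fun {n} r x => frel r x }
  have hfa : f a = a := hsem f (fun x hx => absurd hx (notMem_empty x)) a
  have : Equiv.swap a b a = a := hfa
  rw [Equiv.swap_apply_left] at this
  exact hab this.symm

/-- Key lemma: if `b ∉ dcl(∅)` and `b ∉ A`, then `b ∉ dcl(A)`. -/
lemma not_mem_dcl_aux [L.IsRelational]
    (hUnary : ∀ k : ℕ, k ≠ 1 → IsEmpty (L.Relations k))
    (hsem : SemRigid L M (∅ : Set M)) {b : M}
    (hb : b ∉ dcl L M (∅ : Set M)) {A : Finset M} (hbA : b ∉ A) :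
    b ∉ dcl L M (↑A : Set M) := by
  classical
  intro hmem
  obtain ⟨φ, hφ⟩ := hmem
  obtain ⟨S, hSfin, Hinv⟩ := realize_comp_equiv_aux hUnary φ
  by_cases hcase : ∃ b' : M, b' ∉ A ∧ b' ≠ b ∧
      ∀ R ∈ S, (RelMap R (fun _ : Fin 1 => b') ↔ RelMap R (fun _ : Fin 1 => b))
  · obtain ⟨b', hb'A, hb'b, hcol⟩ := hcase
    set σ := Equiv.swap b b' with hσ
    have hfix : ∀ a : (↑A : Set M), σ ↑a = ↑a := by
      intro a
      apply Equiv.swap_apply_of_ne_of_ne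
      · exact fun hh => hbA (hh ▸ a.2)
      · exact fun hh => hb'A (hh ▸ a.2)
    have hS : ∀ R ∈ S, ∀ x : Fin 1 → M, RelMap R (⇑σ ∘ x) ↔ RelMap R x := by
      intro R hR x
      have hcx : ⇑σ ∘ x = fun _ : Fin 1 => σ (x 0) := by
        funext i; rw [Subsingleton.elim i (0 : Fin 1)]; rfl
      have hx : x = fun _ : Fin 1 => x 0 := by
        funext i; rw [Subsingleton.elim i (0 : Fin 1)]
      rw [hcx]; conv_rhs => rw [hx]
      rcases eq_or_ne (x 0) b with h0 | h0
      · rw [h0, hσ, Equiv.swap_apply_left]; exact hcol R hR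
      · rcases eq_or_ne (x 0) b' with h1 | h1
        · rw [h1, hσ, Equiv.swap_apply_right]; exact (hcol R hR).symm
        · rw [hσ, Equiv.swap_apply_of_ne_of_ne h0 h1]
    have hbreal : φ.Realize (fun _ : Fin 1 => b) := by
      have : (fun _ : Fin 1 => b) ∈ {x : Fin 1 → M | x 0 ∈ ({b} : Set M)} := by simp
      rw [hφ] at this
      exact this
    have hiff := Hinv σ hfix hS (fun _ : Fin 1 => b') default
    have hcb : ⇑σ ∘ (fun _ : Fin 1 => b') = fun _ : Fin 1 => b := by
      funext _; exact Equiv.swap_apply_right b b'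
    have hdef : ⇑σ ∘ (default : Fin 0 → M) = default := by
      funext i; exact i.elim0
    rw [hcb, hdef] at hiff
    have hb'real : (fun _ : Fin 1 => b') ∈ {x : Fin 1 → M | x 0 ∈ ({b} : Set M)} := by
      rw [hφ]
      exact hiff.mp hbreal
    exact hb'b (by simpa using hb'real)
  · have hcase' : ∀ b', b' ∉ A → b' ≠ b → ∃ R ∈ S,
        ¬ (RelMap R (fun _ : Fin 1 => b') ↔ RelMap R (fun _ : Fin 1 => b)) := by
      intro b' h1 h2
      by_contra hno
      push_neg at hno
      exact hcase ⟨b', h1, h2, hno⟩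
    clear hcase
    apply hb
    classical
    have hsep : ∀ a : {x // x ∈ A}, ∃ R : L.Relations 1,
        ¬ (RelMap R (fun _ : Fin 1 => (a : M)) ↔ RelMap R (fun _ : Fin 1 => b)) :=
      fun a => exists_rel_ne_aux hUnary hsem (fun h => hbA (h ▸ a.2))
    choose Ra hRa using hsep
    set U : L.Relations 1 → Set (Fin 1 → M) :=
      fun R => {x | RelMap R x ↔ RelMap R (fun _ : Fin 1 => b)} with hU
    have hUdef : ∀ R : L.Relations 1, (∅ : Set M).Definable L (U R) := by
      intro R
      have hR : (∅ : Set M).Definable L {x : Fin 1 → M | RelMap R x} :=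
        empty_definable_iff.mpr ⟨R.formula Term.var, by
          ext x
          simp [Formula.realize_rel]⟩
      by_cases hRb : RelMap R (fun _ : Fin 1 => b)
      · have : U R = {x : Fin 1 → M | RelMap R x} := by
          ext x; simp [hU, hRb]
        rw [this]; exact hR
      · have : U R = {x : Fin 1 → M | RelMap R x}ᶜ := by
          ext x; simp [hU, hRb]
        rw [this]; exact hR.compl
    have hTeq : {x : Fin 1 → M | x 0 ∈ ({b} : Set M)} =
        (⋂ R ∈ hSfin.toFinset, U R) ∩ ⋂ a ∈ A.attach, U (Ra a) := by
      ext x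
      have hx : x = fun _ : Fin 1 => x 0 := by
        funext i; rw [Subsingleton.elim i (0 : Fin 1)]
      simp only [mem_setOf_eq, mem_singleton_iff, mem_inter_iff, mem_iInter,
        Finite.mem_toFinset, Finset.mem_attach, true_implies]
      constructor
      · intro h0
        constructor
        · intro R _
          show RelMap R x ↔ RelMap R (fun _ : Fin 1 => b)
          conv_lhs => rw [hx, h0]
        · intro a
          show RelMap (Ra a) x ↔ RelMap (Ra a) (fun _ : Fin 1 => b)
          conv_lhs => rw [hx, h0]
      · rintro ⟨h1, h2⟩
        by_contra hne
        have hcongr : ∀ R : L.Relations 1,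
            (RelMap R x ↔ RelMap R (fun _ : Fin 1 => b)) →
            (RelMap R (fun _ : Fin 1 => x 0) ↔ RelMap R (fun _ : Fin 1 => b)) := by
          intro R h
          have e : (fun _ : Fin 1 => x 0) = x := funext fun i => congrArg x (Subsingleton.elim 0 i)
          rw [e]
          exact h
        by_cases hxA : x 0 ∈ A
        · exact hRa ⟨x 0, hxA⟩ (hcongr _ (h2 ⟨x 0, hxA⟩))
        · obtain ⟨R, hRS, hne'⟩ := hcase' (x 0) hxA hne
          exact hne' (hcongr R (h1 R hRS))
    show (∅ : Set M).Definable L {x : Fin 1 → M | x 0 ∈ ({b} : Set M)}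
    rw [hTeq]
    exact (definable_biInter_finset (fun R => hUdef R) hSfin.toFinset).inter
      (definable_biInter_finset (fun a => hUdef (Ra a)) A.attach)

end Aux

/-- An infinite structure in a unary relational language that is semantically ∅-rigid
but not syntactically ∅-rigid admits, for each `n`, an `n`-element set `A` with
`dcl(A) ≠ M`; consequently its ∀-semantic degree is `0` and its ∀-syntactic degree
is `∞`. -/
theorem stmt_10 [L.IsRelational] (hUnary : ∀ k : ℕ, k ≠ 1 → IsEmpty (L.Relations k))
    [Infinite M] (hsem : SemRigid L M (∅ : Set M))
    (hnotsynt : ¬ SyntRigid L M (∅ : Set M)) :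
    (∀ n : ℕ, ∃ A : Finset M, A.card = n ∧ dcl L M ↑A ≠ Set.univ) ∧
    degForallSem L M = 0 ∧ degForallSynt L M = ⊤ := by
  obtain ⟨b, hb⟩ := (Set.ne_univ_iff_exists_notMem _).mp hnotsynt
  have main : ∀ n : ℕ, ∃ A : Finset M, A.card = n ∧ dcl L M ↑A ≠ Set.univ := by
    intro n
    have hinf : ({b}ᶜ : Set M).Infinite :=
      (Set.finite_singleton b).infinite_compl
    obtain ⟨A, hAsub, hAcard⟩ := hinf.exists_subset_card_eq n
    refine ⟨A, hAcard, ?_⟩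
    have hbA : b ∉ A := fun h => (hAsub h) rfl
    have := not_mem_dcl_aux hUnary hsem hb hbA
    intro hcon
    rw [hcon] at this
    exact this (mem_univ b)
  refine ⟨main, ?_, ?_⟩
  · refine le_antisymm (sInf_le ⟨0, by simp, ?_⟩) (zero_le ..)
    intro A hA
    rw [Finset.card_eq_zero] at hA
    subst hA
    rw [Finset.coe_empty]
    exact hsem
  · rw [degForallSynt]
    refine (congrArg sInf (?_ : _ = (∅ : Set ℕ∞))).trans sInf_empty
    ext x
    simp only [mem_setOf_eq, mem_empty_iff_false, iff_false, not_exists]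
    rintro m ⟨rfl, hall⟩
    obtain ⟨A, hAcard, hAne⟩ := main m
    exact hAne (hall A hAcard)
end

section
/- Suppose M and N are nonempty and the composition M[N] is E-definable. Then the map Φ : Aut(M) × (M → Aut(N)) → Aut(M[N]) defined by Φ(g, h)(a, b) = (g(a), h(a)(b)) is well-defined (each Φ(g, h) is an automorphism of M[N]) and bijective; thus Aut(M[N]) is isomorphic to the wreath product of Aut(M) and Aut(N). -/
open FirstOrder Language Set

universe u₁ v₁ u₂ v₂ w₁ w₂

variable (LM : FirstOrder.Language.{u₁, v₁}) (LN : FirstOrder.Language.{u₂, v₂})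
  (M : Type w₁) (N : Type w₂) [LM.Structure M] [LN.Structure N]

/-- The composition `M[N]` of the structures `M` and `N`: the structure on `M × N` in
the (disjoint) union language `Σ_M ∪ Σ_N` where a relation symbol of `Σ_M` holds of a
tuple iff it holds of the tuple of first coordinates in `M`, and a relation symbol of
`Σ_N` holds of a tuple iff all first coordinates agree and it holds of the tuple of
second coordinates in `N`. -/
instance compStructure [LM.IsRelational] [LN.IsRelational] :
    (LM.sum LN).Structure (M × N) where
  funMap f _ := Sum.casesOn f (fun f₁ => isEmptyElim f₁) (fun f₂ => isEmptyElim f₂)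
  RelMap r x :=
    Sum.casesOn r
      (fun rM => Structure.RelMap rM (fun i => (x i).1))
      (fun rN => (∀ i j, (x i).1 = (x j).1) ∧ Structure.RelMap rN (fun i => (x i).2))

/-- The composition `M[N]` is `E`-definable if the equivalence relation identifying the
copies of `N` (equality of first coordinates) is definable without parameters. -/
def EDefinable [LM.IsRelational] [LN.IsRelational] : Prop :=
  (∅ : Set (M × N)).Definable (LM.sum LN) {x : Fin 2 → M × N | (x 0).1 = (x 1).1}

/-- Auxiliary: the map `Φ(g, h)` as an automorphism of `M[N]`. -/
def PhiAux [LM.IsRelational] [LN.IsRelational]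
    (g : M ≃[LM] M) (h : M → (N ≃[LN] N)) : (M × N) ≃[LM.sum LN] (M × N) where
  toFun := fun p => (g p.1, h p.1 p.2)
  invFun := fun p => (g.symm p.1, (h (g.symm p.1)).symm p.2)
  left_inv := fun p => by simp
  right_inv := fun p => by simp
  map_fun' := fun f _ => isEmptyElim f
  map_rel' := by
    rintro n (rM | rN) x
    · exact g.map_rel rM fun i => (x i).1
    · show ((∀ i j, g (x i).1 = g (x j).1) ∧
          Structure.RelMap rN fun i => h (x i).1 (x i).2) ↔
          ((∀ i j, (x i).1 = (x j).1) ∧ Structure.RelMap rN fun i => (x i).2)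
      have key : ∀ (_ : ∀ i j, (x i).1 = (x j).1),
          (Structure.RelMap rN fun i => h (x i).1 (x i).2) ↔
            Structure.RelMap rN fun i => (x i).2 := by
        intro h1
        rcases isEmpty_or_nonempty (Fin n) with he | hne
        · have : (fun i => h (x i).1 (x i).2) = fun i => (x i).2 :=
            funext fun i => he.elim i
          rw [this]
        · obtain ⟨i0⟩ := hne
          have : (fun i => h (x i).1 (x i).2) =
              (h (x i0).1) ∘ fun i => (x i).2 := by
            funext i
            simp only [Function.comp_apply, h1 i i0]
          rw [this]
          exact (h (x i0).1).map_rel rN fun i => (x i).2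
      constructor
      · rintro ⟨h1, h2⟩
        have h1' : ∀ i j, (x i).1 = (x j).1 := fun i j => g.injective (h1 i j)
        exact ⟨h1', (key h1').mp h2⟩
      · rintro ⟨h1, h2⟩
        exact ⟨fun i j => congrArg g (h1 i j), (key h1).mpr h2⟩

/-- For nonempty `M`, `N` with `E`-definable composition `M[N]`, the map
`Φ(g, h)(a, b) = (g a, h a b)` is a well-defined bijection from
`Aut(M) × Aut(N)^M` onto `Aut(M[N])`; thus `Aut(M[N])` is isomorphic to the wreath
product of `Aut(M)` and `Aut(N)`. -/
theorem stmt_18 [LM.IsRelational] [LN.IsRelational] [Nonempty M] [Nonempty N]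
    (hE : EDefinable LM LN M N) :
    ∃ Φ : (M ≃[LM] M) × (M → (N ≃[LN] N)) → ((M × N) ≃[LM.sum LN] (M × N)),
      (∀ (g : M ≃[LM] M) (h : M → (N ≃[LN] N)) (a : M) (b : N),
        Φ (g, h) (a, b) = (g a, h a b)) ∧
      Function.Bijective Φ := by
  classical
  obtain ⟨φ, hφ⟩ := (Set.empty_definable_iff).mp hE
  have hmem : ∀ x : Fin 2 → M × N, (x 0).1 = (x 1).1 ↔ φ.Realize x := by
    intro x
    have := Set.ext_iff.mp hφ x
    exact this
  have Epres : ∀ (σ : (M × N) ≃[LM.sum LN] (M × N)) (p q : M × N),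
      (σ p).1 = (σ q).1 ↔ p.1 = q.1 := by
    intro σ p q
    have h2 := StrongHomClass.realize_formula σ φ (v := ![p, q])
    rw [← hmem, ← hmem] at h2
    simpa using h2
  refine ⟨fun gh => PhiAux LM LN M N gh.1 gh.2, fun g h a b => rfl, ?_, ?_⟩
  · -- injectivity
    rintro ⟨g, h⟩ ⟨g', h'⟩ heq
    have hpt : ∀ a b, ((g a : M), (h a b : N)) = (g' a, h' a b) := fun a b =>
      congrFun (congrArg (fun (e : (M × N) ≃[LM.sum LN] (M × N)) p => e p) heq) (a, b)
    have hg : g = g' := Language.Equiv.ext fun a =>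
      congrArg Prod.fst (hpt a (Classical.arbitrary N))
    have hh : h = h' := funext fun a => Language.Equiv.ext fun b =>
      congrArg Prod.snd (hpt a b)
    rw [Prod.mk.injEq]
    exact ⟨hg, hh⟩
  · -- surjectivity
    intro σ
    set b₀ : N := Classical.arbitrary N with hb₀
    have first_indep : ∀ (a : M) (b b' : N), (σ (a, b)).1 = (σ (a, b')).1 :=
      fun a b b' => (Epres σ (a, b) (a, b')).mpr rfl
    -- the induced automorphism of M
    have gleft : ∀ a : M, (σ.symm ((σ (a, b₀)).1, b₀)).1 = a := by
      intro a
      refine (Epres σ _ (a, b₀)).mp ?_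
      rw [σ.apply_symm_apply]
    have gright : ∀ c : M, (σ ((σ.symm (c, b₀)).1, b₀)).1 = c := by
      intro c
      have h1 : (σ ((σ.symm (c, b₀)).1, b₀)).1 = (σ (σ.symm (c, b₀))).1 :=
        (Epres σ _ _).mpr rfl
      rw [h1, σ.apply_symm_apply]
    let g : M ≃[LM] M :=
      { toFun := fun a => (σ (a, b₀)).1
        invFun := fun c => (σ.symm (c, b₀)).1
        left_inv := gleft
        right_inv := gright
        map_fun' := fun f _ => isEmptyElim f
        map_rel' := fun {n} rM v => σ.map_rel (Sum.inl rM) fun i => (v i, b₀) }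
    -- the induced automorphisms of N
    have hfix : ∀ (a : M) (b : N), ((σ (a, b₀)).1, (σ (a, b)).2) = σ (a, b) :=
      fun a b => Prod.ext (first_indep a b₀ b) rfl
    have hsfix : ∀ (a : M) (b : N), (σ.symm ((σ (a, b₀)).1, b)).1 = a := by
      intro a b
      refine (Epres σ _ (a, b₀)).mp ?_
      rw [σ.apply_symm_apply]
    let h : M → (N ≃[LN] N) := fun a =>
      { toFun := fun b => (σ (a, b)).2
        invFun := fun b => (σ.symm ((σ (a, b₀)).1, b)).2
        left_inv := by
          intro b
          show (σ.symm ((σ (a, b₀)).1, (σ (a, b)).2)).2 = b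
          rw [hfix a b, σ.symm_apply_apply]
        right_inv := by
          intro b
          show (σ (a, (σ.symm ((σ (a, b₀)).1, b)).2)).2 = b
          have h1 : (a, (σ.symm ((σ (a, b₀)).1, b)).2) = σ.symm ((σ (a, b₀)).1, b) :=
            Prod.ext (hsfix a b).symm rfl
          rw [h1, σ.apply_symm_apply]
        map_fun' := fun f _ => isEmptyElim f
        map_rel' := by
          intro n rN v
          have key : ((∀ i j, (σ (a, v i)).1 = (σ (a, v j)).1) ∧
              Structure.RelMap rN fun i => (σ (a, v i)).2) ↔
              ((∀ i j, (a : M) = a) ∧ Structure.RelMap rN fun i => (v i : N)) :=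
            σ.map_rel (Sum.inr rN) fun i => (a, v i)
          constructor
          · intro hr
            exact (key.mp ⟨fun i j =>
              (first_indep a (v i) b₀).trans (first_indep a b₀ (v j)), hr⟩).2
          · intro hr
            exact (key.mpr ⟨fun _ _ => rfl, hr⟩).2 }
    refine ⟨(g, h), ?_⟩
    refine Language.Equiv.ext fun p => ?_
    show ((σ (p.1, b₀)).1, (σ (p.1, p.2)).2) = σ p
    rw [hfix p.1 p.2]
end
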